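/- Unique minimizer of the multiclass tempered cross-entropy and argmax preservation (core of Theorem 3): let 0 < t₁ < 2 and let p = (p_c)_{c=1}^C be a probability vector with all entries positive. Over all probability vectors q = (q_c)_{c=1}^C with positive entries, the function q ↦ -Σ_{c=1}^C p_c · log_{t₁}(q_c) attains its minimum at the unique point q* given by q*_c = p_c^{1/t₁} / Σ_{j=1}^C p_j^{1/t₁}. Moreover, for every class c, q*_c is maximal among the entries of q* if and only if p_c is maximal among the entries of p. -/

import Mathlib

/-- The tempered logarithm `log_t`: for `t ≠ 1` it is `(x^(1-t) - 1)/(1-t)`;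
for `t = 1` it is the natural logarithm. -/
noncomputable def tlog (t x : ℝ) : ℝ :=
  if t = 1 then Real.log x else (x ^ (1 - t) - 1) / (1 - t)

lemma hasDerivAt_tlog (t : ℝ) {x : ℝ} (hx : 0 < x) :
    HasDerivAt (tlog t) (x ^ (-t)) x := by
  by_cases h : t = 1
  · have : tlog t = Real.log := by funext y; simp [tlog, h]
    rw [this, h]
    simpa [Real.rpow_neg_one] using Real.hasDerivAt_log hx.ne'
  · have h1 : (1 : ℝ) - t ≠ 0 := sub_ne_zero.mpr (by simpa using fun hh => h hh.symm)
    have : tlog t = fun y => (y ^ (1 - t) - 1) / (1 - t) := by funext y; simp [tlog, h]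
    rw [this]
    have hd : HasDerivAt (fun y : ℝ => y ^ (1 - t)) ((1 - t) * x ^ (1 - t - 1)) x :=
      Real.hasDerivAt_rpow_const (Or.inl hx.ne')
    have := ((hd.sub_const 1).div_const (1 - t))
    have he : (1:ℝ) - t - 1 = -t := by ring
    rw [he] at this
    simpa [mul_div_assoc, mul_div_cancel_left₀ _ h1] using this

lemma tlog_tangent_lt (t : ℝ) (ht : 0 < t) {x y : ℝ} (hx : 0 < x) (hy : 0 < y)
    (hxy : x ≠ y) : tlog t x < tlog t y + (x - y) * y ^ (-t) := by
  set g : ℝ → ℝ := fun z => tlog t z - z * y ^ (-t) with hg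
  have hder : ∀ z : ℝ, 0 < z → HasDerivAt g (z ^ (-t) - y ^ (-t)) z := by
    intro z hz
    have hh := (hasDerivAt_tlog t hz).sub ((hasDerivAt_id z).mul_const (y ^ (-t)))
    simp only [one_mul] at hh
    exact hh
  have key : g x < g y := by
    rcases lt_or_gt_of_ne hxy with h | h
    · -- x < y : g strictly mono on Ioc 0 y
      have hmono : StrictMonoOn g (Set.Ioc 0 y) := by
        apply strictMonoOn_of_deriv_pos (convex_Ioc 0 y)
        · exact fun z hz => (hder z hz.1).continuousAt.continuousWithinAt
        · intro z hz
          rw [interior_Ioc] at hz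
          rw [(hder z hz.1).deriv]
          have := Real.rpow_lt_rpow_of_neg hz.1 hz.2 (neg_neg_of_pos ht)
          linarith
      exact hmono ⟨hx, h.le⟩ ⟨hy, le_refl y⟩ h
    · -- y < x : g strictly anti on Ici y
      have hanti : StrictAntiOn g (Set.Ici y) := by
        apply strictAntiOn_of_deriv_neg (convex_Ici y)
        · exact fun z hz => (hder z (hy.trans_le hz)).continuousAt.continuousWithinAt
        · intro z hz
          rw [interior_Ici] at hz
          rw [(hder z (hy.trans hz)).deriv]
          have := Real.rpow_lt_rpow_of_neg hy hz (neg_neg_of_pos ht)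
          linarith
      exact hanti (le_refl y) h.le h
  simp only [hg] at key
  nlinarith [key]

/-- Unique minimizer of the multiclass tempered cross-entropy and argmax
preservation: for `0 < t₁ < 2` and a strictly positive probability vector `p`,
over strictly positive probability vectors `q` the map
`q ↦ -∑ c, p c * log_{t₁} (q c)` attains its minimum exactly at
`q* c = (p c)^(1/t₁) / ∑ j, (p j)^(1/t₁)`; moreover `q*` has the same maximal
entries as `p`. -/
theorem multiclass_cross_entropy_minimizer (t₁ : ℝ) (ht0 : 0 < t₁)
    (ht2 : t₁ < 2) (C : ℕ) (p : Fin C → ℝ) (hp : ∀ c, 0 < p c)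
    (hps : ∑ c : Fin C, p c = 1) :
    (∀ q : Fin C → ℝ, (∀ c, 0 < q c) → ∑ c : Fin C, q c = 1 →
      -∑ c : Fin C, p c *
          tlog t₁ ((p c) ^ (1 / t₁) / ∑ j : Fin C, (p j) ^ (1 / t₁)) ≤
        -∑ c : Fin C, p c * tlog t₁ (q c)) ∧
    (∀ q : Fin C → ℝ, (∀ c, 0 < q c) → ∑ c : Fin C, q c = 1 →
      (-∑ c : Fin C, p c * tlog t₁ (q c)) =
        (-∑ c : Fin C, p c *
          tlog t₁ ((p c) ^ (1 / t₁) / ∑ j : Fin C, (p j) ^ (1 / t₁))) →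
      q = fun c => (p c) ^ (1 / t₁) / ∑ j : Fin C, (p j) ^ (1 / t₁)) ∧
    (∀ c : Fin C,
      (∀ j : Fin C, (p j) ^ (1 / t₁) / (∑ i : Fin C, (p i) ^ (1 / t₁)) ≤
        (p c) ^ (1 / t₁) / ∑ i : Fin C, (p i) ^ (1 / t₁)) ↔
      (∀ j : Fin C, p j ≤ p c)) := by
  have hC : Nonempty (Fin C) := by
    rcases Nat.eq_zero_or_pos C with h | h
    · subst h; simp at hps
    · exact ⟨⟨0, h⟩⟩
  set Z : ℝ := ∑ j : Fin C, (p j) ^ (1 / t₁) with hZdef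
  have hZ : 0 < Z :=
    Finset.sum_pos (fun j _ => Real.rpow_pos_of_pos (hp j) _) Finset.univ_nonempty
  set qs : Fin C → ℝ := fun c => (p c) ^ (1 / t₁) / Z with hqsdef
  have hqs_pos : ∀ c, 0 < qs c := fun c =>
    div_pos (Real.rpow_pos_of_pos (hp c) _) hZ
  have hqs_sum : ∑ c : Fin C, qs c = 1 := by
    simp only [hqsdef]
    rw [← Finset.sum_div, ← hZdef, div_self hZ.ne']
  have hkey : ∀ c, p c * (qs c) ^ (-t₁) = Z ^ t₁ := by
    intro c
    have h1 : (qs c) ^ (-t₁) = ((p c) ^ (1 / t₁)) ^ (-t₁) / Z ^ (-t₁) :=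
      Real.div_rpow (Real.rpow_pos_of_pos (hp c) _).le hZ.le (-t₁)
    have h2 : ((p c) ^ (1 / t₁)) ^ (-t₁) = (p c)⁻¹ := by
      rw [← Real.rpow_mul (hp c).le,
        show (1 / t₁) * (-t₁) = -1 by field_simp, Real.rpow_neg_one]
    have h3 : Z ^ (-t₁) = (Z ^ t₁)⁻¹ := by
      rw [Real.rpow_neg hZ.le]
    have hZt : (0:ℝ) < Z ^ t₁ := Real.rpow_pos_of_pos hZ _
    rw [h1, h2, h3]
    field_simp
    exact div_self (hp c).ne'
  -- termwise inequality
  have hterm : ∀ q : Fin C → ℝ, (∀ c, 0 < q c) → ∀ c : Fin C,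
      p c * tlog t₁ (q c) ≤ p c * tlog t₁ (qs c) + Z ^ t₁ * (q c - qs c) := by
    intro q hq c
    rcases eq_or_ne (q c) (qs c) with h | h
    · rw [h]; ring_nf; rfl
    · have := tlog_tangent_lt t₁ ht0 (hq c) (hqs_pos c) h
      have h2 := mul_lt_mul_of_pos_left this (hp c)
      calc p c * tlog t₁ (q c) ≤
          p c * (tlog t₁ (qs c) + (q c - qs c) * (qs c) ^ (-t₁)) := h2.le
        _ = p c * tlog t₁ (qs c) + (p c * (qs c) ^ (-t₁)) * (q c - qs c) := by ring
        _ = p c * tlog t₁ (qs c) + Z ^ t₁ * (q c - qs c) := by rw [hkey c]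
  have htermlt : ∀ q : Fin C → ℝ, (∀ c, 0 < q c) → ∀ c : Fin C, q c ≠ qs c →
      p c * tlog t₁ (q c) < p c * tlog t₁ (qs c) + Z ^ t₁ * (q c - qs c) := by
    intro q hq c h
    have := tlog_tangent_lt t₁ ht0 (hq c) (hqs_pos c) h
    have h2 := mul_lt_mul_of_pos_left this (hp c)
    calc p c * tlog t₁ (q c) <
        p c * (tlog t₁ (qs c) + (q c - qs c) * (qs c) ^ (-t₁)) := h2
      _ = p c * tlog t₁ (qs c) + (p c * (qs c) ^ (-t₁)) * (q c - qs c) := by ring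
      _ = p c * tlog t₁ (qs c) + Z ^ t₁ * (q c - qs c) := by rw [hkey c]
  have hsum_eq : ∀ q : Fin C → ℝ, ∑ c : Fin C, q c = 1 →
      ∑ c : Fin C, (p c * tlog t₁ (qs c) + Z ^ t₁ * (q c - qs c)) =
        ∑ c : Fin C, p c * tlog t₁ (qs c) := by
    intro q hq1
    rw [Finset.sum_add_distrib, ← Finset.mul_sum, Finset.sum_sub_distrib,
      hq1, hqs_sum]
    simp
  refine ⟨?_, ?_, ?_⟩
  · intro q hq hq1
    have h1 : ∑ c : Fin C, p c * tlog t₁ (q c) ≤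
        ∑ c : Fin C, p c * tlog t₁ (qs c) := by
      calc ∑ c : Fin C, p c * tlog t₁ (q c)
          ≤ ∑ c : Fin C, (p c * tlog t₁ (qs c) + Z ^ t₁ * (q c - qs c)) :=
            Finset.sum_le_sum (fun c _ => hterm q hq c)
        _ = ∑ c : Fin C, p c * tlog t₁ (qs c) := hsum_eq q hq1
    simpa [hqsdef, hZdef] using neg_le_neg h1
  · intro q hq hq1 heq
    by_contra hne
    have : ∃ c, q c ≠ qs c := by
      by_contra hall
      push_neg at hall
      exact hne (funext hall)
    obtain ⟨c₀, hc₀⟩ := this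
    have h1 : ∑ c : Fin C, p c * tlog t₁ (q c) <
        ∑ c : Fin C, (p c * tlog t₁ (qs c) + Z ^ t₁ * (q c - qs c)) :=
      Finset.sum_lt_sum (fun c _ => hterm q hq c)
        ⟨c₀, Finset.mem_univ c₀, htermlt q hq c₀ hc₀⟩
    rw [hsum_eq q hq1] at h1
    have heq' : ∑ c : Fin C, p c * tlog t₁ (q c) =
        ∑ c : Fin C, p c * tlog t₁ (qs c) := by
      have := neg_injective heq
      simpa [hqsdef, hZdef] using this
    linarith
  · intro c
    have hiff : ∀ j : Fin C, ((p j) ^ (1 / t₁) / Z ≤ (p c) ^ (1 / t₁) / Z ↔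
        p j ≤ p c) := by
      intro j
      rw [div_le_div_iff_of_pos_right hZ]
      constructor
      · intro h
        by_contra hlt
        push_neg at hlt
        exact absurd h (not_le.mpr
          (Real.rpow_lt_rpow (hp c).le hlt (by positivity)))
      · intro h
        exact Real.rpow_le_rpow (hp j).le h (by positivity)
    exact ⟨fun h j => (hiff j).mp (h j), fun h j => (hiff j).mpr (h j)⟩
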